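/- The two-bar chain dynamical matrix D(k) is Hermitian positive semidefinite for every k, and it is positive definite whenever e^{ik(L₁+L₂)} ≠ 1; its kernel for k with e^{ik(L₁+L₂)} = 1 is one-dimensional, spanned by (1, e^{ikL₁}). -/

import Mathlib

open Matrix
open scoped ComplexOrder

lemma quad_abs (a b : ℝ) (E1 F1 E2 F2 : ℂ)
    (h1 : F1 * E1 = 1) (h2 : F2 * E2 = 1)
    (c1 : (starRingEnd ℂ) E1 = F1) (c2 : (starRingEnd ℂ) E2 = F2) (x : Fin 2 → ℂ) :
    star x ⬝ᵥ ((a : ℂ) • !![1, -F1; -E1, 1] + (b : ℂ) • !![1, -E2; -F2, 1]).mulVec x =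
      ((a * Complex.normSq (x 0 - F1 * x 1) + b * Complex.normSq (x 0 - E2 * x 1) : ℝ) : ℂ) := by
  have c1' : (starRingEnd ℂ) F1 = E1 := by rw [← c1, Complex.conj_conj]
  have c2' : (starRingEnd ℂ) F2 = E2 := by rw [← c2, Complex.conj_conj]
  simp only [Matrix.mulVec, dotProduct, Fin.sum_univ_two, Pi.star_apply,
    Matrix.add_apply, Matrix.smul_apply, Matrix.cons_val', Matrix.cons_val_zero,
    Matrix.cons_val_one, Matrix.head_cons, Matrix.empty_val', Matrix.cons_val_fin_one,
    Matrix.head_fin_const, smul_eq_mul, RCLike.star_def, Matrix.of_apply]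
  simp only [Complex.ofReal_add, Complex.ofReal_mul, Complex.normSq_eq_conj_mul_self,
    map_sub, _root_.map_mul, c1, c2, c1', c2']
  linear_combination -((a : ℂ) * x 1 * (starRingEnd ℂ) (x 1)) * h1
    - ((b : ℂ) * x 1 * (starRingEnd ℂ) (x 1)) * h2

lemma main_abs (a b : ℝ) (ha : 0 < a) (hb : 0 < b) (E1 F1 E2 F2 : ℂ)
    (h1 : F1 * E1 = 1) (h2 : F2 * E2 = 1)
    (c1 : (starRingEnd ℂ) E1 = F1) (c2 : (starRingEnd ℂ) E2 = F2) :
    ((a : ℂ) • !![1, -F1; -E1, 1] + (b : ℂ) • !![1, -E2; -F2, 1]).PosSemidef ∧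
      (E1 * E2 ≠ 1 → ((a : ℂ) • !![1, -F1; -E1, 1] + (b : ℂ) • !![1, -E2; -F2, 1]).PosDef) ∧
      (E1 * E2 = 1 → ∀ v : Fin 2 → ℂ,
        ((a : ℂ) • !![1, -F1; -E1, 1] + (b : ℂ) • !![1, -E2; -F2, 1]).mulVec v = 0 ↔
          ∃ c : ℂ, v = c • ![1, E1]) := by
  have c1' : (starRingEnd ℂ) F1 = E1 := by rw [← c1, Complex.conj_conj]
  have c2' : (starRingEnd ℂ) F2 = E2 := by rw [← c2, Complex.conj_conj]
  set M : Matrix (Fin 2) (Fin 2) ℂ :=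
    (a : ℂ) • !![1, -F1; -E1, 1] + (b : ℂ) • !![1, -E2; -F2, 1] with hM
  have quad := quad_abs a b E1 F1 E2 F2 h1 h2 c1 c2
  have herm : M.IsHermitian := by
    ext i j
    fin_cases i <;> fin_cases j <;>
      simp [hM, Matrix.conjTranspose_apply, c1, c2, c1', c2', Complex.conj_ofReal]
  have hzero : ∀ x : Fin 2 → ℂ,
      (a * Complex.normSq (x 0 - F1 * x 1) + b * Complex.normSq (x 0 - E2 * x 1) = 0)
        → (x 0 = F1 * x 1 ∧ x 0 = E2 * x 1) := by
    intro x h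
    have n1 : 0 ≤ Complex.normSq (x 0 - F1 * x 1) := Complex.normSq_nonneg _
    have n2 : 0 ≤ Complex.normSq (x 0 - E2 * x 1) := Complex.normSq_nonneg _
    have e1 : Complex.normSq (x 0 - F1 * x 1) = 0 := by nlinarith
    have e2 : Complex.normSq (x 0 - E2 * x 1) = 0 := by nlinarith
    rw [Complex.normSq_eq_zero, sub_eq_zero] at e1 e2
    exact ⟨e1, e2⟩
  have hnn : ∀ x : Fin 2 → ℂ,
      0 ≤ a * Complex.normSq (x 0 - F1 * x 1) + b * Complex.normSq (x 0 - E2 * x 1) := by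
    intro x
    have n1 := Complex.normSq_nonneg (x 0 - F1 * x 1)
    have n2 := Complex.normSq_nonneg (x 0 - E2 * x 1)
    positivity
  have psd : M.PosSemidef := by
    refine Matrix.posSemidef_iff_dotProduct_mulVec.mpr ⟨herm, fun x => ?_⟩
    rw [quad x]
    exact_mod_cast Complex.zero_le_real.mpr (hnn x)
  refine ⟨psd, ?_, ?_⟩
  · intro hne
    refine Matrix.posDef_iff_dotProduct_mulVec.mpr ⟨herm, fun x hx => ?_⟩
    rw [quad x]
    rw [Complex.zero_lt_real]
    rcases lt_or_eq_of_le (hnn x) with h | h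
    · exact h
    · exfalso
      obtain ⟨u, w⟩ := hzero x h.symm
      by_cases hx1 : x 1 = 0
      · apply hx
        funext i
        fin_cases i
        · simpa [hx1] using u
        · exact hx1
      · apply hne
        have hF : F1 = E2 := by
          have := u.symm.trans w
          exact mul_right_cancel₀ hx1 this
        calc E1 * E2 = E1 * F1 := by rw [hF]
        _ = 1 := by linear_combination h1
  · intro hE v
    constructor
    · intro hv
      have hq := quad v
      rw [hv] at hq
      simp at hq
      have hq' : a * Complex.normSq (v 0 - F1 * v 1) + b * Complex.normSq (v 0 - E2 * v 1) = 0 := by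
        exact_mod_cast hq.symm
      obtain ⟨u, w⟩ := hzero v hq'
      refine ⟨v 0, ?_⟩
      funext i
      fin_cases i
      · simp
      · simp [Fin.mk_one]
        linear_combination -E1 * u - (v 1) * h1
    · rintro ⟨c, rfl⟩
      funext i
      fin_cases i
      · simp [hM, Matrix.mulVec, dotProduct, Fin.sum_univ_two, Fin.mk_zero]
        linear_combination (-((a:ℂ) * c)) * h1 + (-((b:ℂ) * c)) * hE
      · simp [hM, Matrix.mulVec, dotProduct, Fin.sum_univ_two, Fin.mk_one]
        linear_combination ((b:ℂ) * c * F2) * hE - ((b:ℂ) * c * E1) * h2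


/-- Dynamical matrix of the two-bar one-dimensional chain. -/
noncomputable def Dtwo (EA1 EA2 L1 L2 k : ℝ) : Matrix (Fin 2) (Fin 2) ℂ :=
  ((EA1 / (L1 * (L1 + L2)) : ℝ) : ℂ) •
      !![1, -Complex.exp (-Complex.I * (k * L1));
         -Complex.exp (Complex.I * (k * L1)), 1] +
    ((EA2 / (L2 * (L1 + L2)) : ℝ) : ℂ) •
      !![1, -Complex.exp (Complex.I * (k * L2));
         -Complex.exp (-Complex.I * (k * L2)), 1]

/-- `D(k)` is Hermitian positive semidefinite for every `k`; it is positive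
definite whenever `e^{ik(L₁+L₂)} ≠ 1`; and when `e^{ik(L₁+L₂)} = 1` its kernel
is one-dimensional, spanned by `(1, e^{ikL₁})`. -/
theorem Dtwo_posSemidef_posDef_kernel (EA1 EA2 L1 L2 : ℝ)
    (hEA1 : 0 < EA1) (hEA2 : 0 < EA2) (hL1 : 0 < L1) (hL2 : 0 < L2) (k : ℝ) :
    (Dtwo EA1 EA2 L1 L2 k).PosSemidef ∧
      (Complex.exp (Complex.I * (k * (L1 + L2))) ≠ 1 → (Dtwo EA1 EA2 L1 L2 k).PosDef) ∧
      (Complex.exp (Complex.I * (k * (L1 + L2))) = 1 →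
        ∀ v : Fin 2 → ℂ,
          (Dtwo EA1 EA2 L1 L2 k).mulVec v = 0 ↔
            ∃ c : ℂ, v = c • ![1, Complex.exp (Complex.I * (k * L1))]) := by
  have key : Complex.exp (Complex.I * (k * (L1 + L2))) =
      Complex.exp (Complex.I * (k * L1)) * Complex.exp (Complex.I * (k * L2)) := by
    rw [← Complex.exp_add]; congr 1; push_cast; ring
  have h1 : Complex.exp (-Complex.I * (k * L1)) * Complex.exp (Complex.I * (k * L1)) = 1 := by
    rw [← Complex.exp_add]; ring_nf; exact Complex.exp_zero
  have h2 : Complex.exp (-Complex.I * (k * L2)) * Complex.exp (Complex.I * (k * L2)) = 1 := by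
    rw [← Complex.exp_add]; ring_nf; exact Complex.exp_zero
  have c1 : (starRingEnd ℂ) (Complex.exp (Complex.I * (k * L1))) =
      Complex.exp (-Complex.I * (k * L1)) := by
    rw [← Complex.exp_conj]; congr 1; simp
  have c2 : (starRingEnd ℂ) (Complex.exp (Complex.I * (k * L2))) =
      Complex.exp (-Complex.I * (k * L2)) := by
    rw [← Complex.exp_conj]; congr 1; simp
  have ha : 0 < EA1 / (L1 * (L1 + L2)) := by positivity
  have hb : 0 < EA2 / (L2 * (L1 + L2)) := by positivity
  have H := main_abs (EA1 / (L1 * (L1 + L2))) (EA2 / (L2 * (L1 + L2))) ha hb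
    (Complex.exp (Complex.I * (k * L1))) (Complex.exp (-Complex.I * (k * L1)))
    (Complex.exp (Complex.I * (k * L2))) (Complex.exp (-Complex.I * (k * L2)))
    h1 h2 c1 c2
  rw [show Dtwo EA1 EA2 L1 L2 k =
      ((EA1 / (L1 * (L1 + L2)) : ℝ) : ℂ) •
        !![1, -Complex.exp (-Complex.I * (k * L1)); -Complex.exp (Complex.I * (k * L1)), 1] +
      ((EA2 / (L2 * (L1 + L2)) : ℝ) : ℂ) •
        !![1, -Complex.exp (Complex.I * (k * L2)); -Complex.exp (-Complex.I * (k * L2)), 1]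
    from rfl, key]
  exact H
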